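/- A simple graph G with n vertices and m edges has a Hamiltonian path if and only if there exists a permutation π of the columns of its incidence matrix A with cons1(π(A)) ≤ 2m − (n−1). -/

import Mathlib

open Finset

/-- Extend a row of length `n` by zeros to an `ℕ`-indexed row. -/
def rowExt (n : ℕ) (r : Fin n → Bool) : ℕ → Bool :=
  fun j => if h : j < n then r ⟨j, h⟩ else false

/-- The number of maximal blocks of consecutive ones in a row. -/
def cons1Row (n : ℕ) (r : Fin n → Bool) : ℕ :=
  ((Finset.range n).filter
    (fun j => rowExt n r j = true ∧ (j = 0 ∨ rowExt n r (j - 1) = false))).card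

/-- The total number of maximal blocks of consecutive ones in a binary matrix. -/
def cons1 {m n : ℕ} (A : Fin m → Fin n → Bool) : ℕ :=
  ∑ i, cons1Row n (A i)

/-- Append a column of zeros to the right of a binary matrix. -/
def appendZero {m n : ℕ} (A : Fin m → Fin n → Bool) : Fin m → Fin (n + 1) → Bool :=
  fun i j => if h : (j : ℕ) < n then A i ⟨j, h⟩ else false

/-- Hamming distance between two columns of a binary matrix. -/
def colHam {m N : ℕ} (B : Fin m → Fin N → Bool) (a b : Fin N) : ℕ :=
  hammingDist (fun i => B i a) (fun i => B i b)

lemma cons1Row_pair {n : ℕ} (r : Fin n → Bool) (a b : Fin n) (hab : (a:ℕ) < (b:ℕ))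
    (hr : ∀ i, r i = true ↔ i = a ∨ i = b) :
    cons1Row n r = if (b:ℕ) = (a:ℕ) + 1 then 1 else 2 := by
  have ha := a.isLt; have hb := b.isLt
  have hrow : ∀ j : ℕ, rowExt n r j = true ↔ (j = (a:ℕ) ∨ j = (b:ℕ)) := by
    intro j
    unfold rowExt
    split
    · next h => rw [hr]; simp [Fin.ext_iff]
    · next h =>
      simp only [Bool.false_eq_true, false_iff]
      omega
  have hfalse : ∀ k, ¬(k = (a:ℕ) ∨ k = (b:ℕ)) → rowExt n r k = false := by
    intro k hk
    cases hval : rowExt n r k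
    · rfl
    · exact absurd ((hrow k).mp hval) hk
  unfold cons1Row
  have hset : (Finset.range n).filter
      (fun j => rowExt n r j = true ∧ (j = 0 ∨ rowExt n r (j - 1) = false)) =
      if (b:ℕ) = (a:ℕ) + 1 then {(a:ℕ)} else {(a:ℕ), (b:ℕ)} := by
    ext j
    simp only [Finset.mem_filter, Finset.mem_range]
    constructor
    · rintro ⟨hjn, htrue, hcond⟩
      have hj : j = (a:ℕ) ∨ j = (b:ℕ) := (hrow j).mp htrue
      split
      · next hcons =>
        simp only [Finset.mem_singleton]
        rcases hj with h | h
        · exact h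
        · exfalso
          rcases hcond with h0 | hf
          · omega
          · have : rowExt n r (j-1) = true := (hrow (j-1)).mpr (Or.inl (by omega))
            rw [hf] at this; simp at this
      · next hcons =>
        simpa using hj
    · intro hmem
      have hamem : (a:ℕ) < n ∧ rowExt n r (a:ℕ) = true ∧
          ((a:ℕ) = 0 ∨ rowExt n r ((a:ℕ) - 1) = false) := by
        refine ⟨ha, (hrow _).mpr (Or.inl rfl), ?_⟩
        rcases Nat.eq_zero_or_pos (a:ℕ) with h0 | hpos
        · exact Or.inl h0
        · exact Or.inr (hfalse _ (by omega))
      split at hmem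
      · next hcons =>
        simp only [Finset.mem_singleton] at hmem
        subst hmem; exact hamem
      · next hcons =>
        simp only [Finset.mem_insert, Finset.mem_singleton] at hmem
        rcases hmem with h | h
        · subst h; exact hamem
        · subst h
          exact ⟨hb, (hrow _).mpr (Or.inr rfl), Or.inr (hfalse _ (by omega))⟩
  rw [hset]
  split
  · simp
  · rw [Finset.card_insert_of_notMem (by simp; omega), Finset.card_singleton]


lemma row_key2 {n : ℕ} (π : Equiv.Perm (Fin n)) (r : Fin n → Bool) (u v : Fin n)
    (hr : ∀ i, r i = true ↔ π i = u ∨ π i = v)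
    (hlt : ((π.symm u : Fin n) : ℕ) < ((π.symm v : Fin n) : ℕ)) :
    (cons1Row n r = 1 ∨ cons1Row n r = 2) ∧
    (cons1Row n r = 1 ↔
      ∃ i : ℕ, ∃ h : i + 1 < n, s(u, v) = s(π ⟨i, by omega⟩, π ⟨i + 1, h⟩)) := by
  set p := π.symm u with hp
  set q := π.symm v with hq
  have hu : π p = u := π.apply_symm_apply u
  have hv : π q = v := π.apply_symm_apply v
  have hr' : ∀ i, r i = true ↔ i = p ∨ i = q := by
    intro i
    rw [hr]
    constructor
    · rintro (h | h)
      · exact Or.inl (π.injective (h.trans hu.symm))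
      · exact Or.inr (π.injective (h.trans hv.symm))
    · rintro (h | h)
      · left; rw [h, hu]
      · right; rw [h, hv]
  rw [cons1Row_pair r p q hlt hr']
  constructor
  · split <;> simp
  · have hqlt := q.isLt
    split
    · next hcons =>
      simp only [eq_self_iff_true, true_iff]
      refine ⟨(p : ℕ), by omega, ?_⟩
      have h1 : (⟨(p : ℕ), by omega⟩ : Fin n) = p := rfl
      have h2 : (⟨(p : ℕ) + 1, by omega⟩ : Fin n) = q := by
        apply Fin.ext; simp [hcons]
      rw [h1, h2, hu, hv]
    · next hcons =>
      constructor
      · intro h; omega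
      · rintro ⟨i, h, heq⟩
        exfalso
        rw [Sym2.eq_iff] at heq
        rcases heq with ⟨h1, h2⟩ | ⟨h1, h2⟩
        · have hp1 : p = ⟨i, by omega⟩ := π.injective (by rw [hu]; exact h1)
          have hq1 : q = ⟨i + 1, h⟩ := π.injective (by rw [hv]; exact h2)
          have e1 : (p : ℕ) = i := by rw [hp1]
          have e2 : (q : ℕ) = i + 1 := by rw [hq1]
          omega
        · have hp1 : p = ⟨i + 1, h⟩ := π.injective (by rw [hu]; exact h1)
          have hq1 : q = ⟨i, by omega⟩ := π.injective (by rw [hv]; exact h2)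
          have e1 : (p : ℕ) = i + 1 := by rw [hp1]
          have e2 : (q : ℕ) = i := by rw [hq1]
          omega


lemma row_key {n m : ℕ} {G : SimpleGraph (Fin n)} (e : Fin m ≃ G.edgeSet)
    (A : Fin m → Fin n → Bool)
    (hA : ∀ j i, A j i = true ↔ i ∈ (e j : Sym2 (Fin n)))
    (π : Equiv.Perm (Fin n)) (j : Fin m) :
    (cons1Row n (fun i => A j (π i)) = 1 ∨ cons1Row n (fun i => A j (π i)) = 2) ∧
    (cons1Row n (fun i => A j (π i)) = 1 ↔
      ∃ i : ℕ, ∃ h : i + 1 < n,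
        (e j : Sym2 (Fin n)) = s(π ⟨i, Nat.lt_of_succ_lt h⟩, π ⟨i + 1, h⟩)) := by
  obtain ⟨⟨u, v⟩, huv⟩ := Quot.exists_rep (e j : Sym2 (Fin n))
  have hedge : (e j : Sym2 (Fin n)) = s(u, v) := huv.symm
  have hadj : G.Adj u v := by
    have h2 := (e j).2
    rw [hedge, SimpleGraph.mem_edgeSet] at h2
    exact h2
  have hne : ((π.symm u : Fin n) : ℕ) ≠ ((π.symm v : Fin n) : ℕ) := by
    intro h
    exact hadj.ne (π.symm.injective (Fin.ext h))
  have hr : ∀ i, A j (π i) = true ↔ π i = u ∨ π i = v := by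
    intro i
    rw [hA, hedge, Sym2.mem_iff]
  rcases Nat.lt_or_ge ((π.symm u : Fin n) : ℕ) ((π.symm v : Fin n) : ℕ) with hlt | hge
  · have := row_key2 π (fun i => A j (π i)) u v hr hlt
    rw [hedge]
    exact this
  · have hlt : ((π.symm v : Fin n) : ℕ) < ((π.symm u : Fin n) : ℕ) := by omega
    have hr' : ∀ i, A j (π i) = true ↔ π i = v ∨ π i = u := by
      intro i; rw [hr]; exact or_comm
    have := row_key2 π (fun i => A j (π i)) v u hr' hlt
    rw [hedge, Sym2.eq_swap]
    exact this


lemma sum_key {n m : ℕ} {G : SimpleGraph (Fin n)} (e : Fin m ≃ G.edgeSet)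
    (A : Fin m → Fin n → Bool)
    (hA : ∀ j i, A j i = true ↔ i ∈ (e j : Sym2 (Fin n)))
    (π : Equiv.Perm (Fin n)) :
    (cons1 (fun j i => A j (π i)) : ℤ) =
      2 * m - ((univ.filter (fun j : Fin m =>
        cons1Row n (fun i => A j (π i)) = 1)).card : ℤ) := by
  unfold cons1
  rw [Nat.cast_sum]
  have hcongr : ∀ j ∈ (univ : Finset (Fin m)),
      ((cons1Row n (fun i => A j (π i)) : ℤ)) =
        2 - (if cons1Row n (fun i => A j (π i)) = 1 then (1:ℤ) else 0) := by
    intro j _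
    rcases (row_key e A hA π j).1 with h | h <;> rw [h] <;> norm_num
  rw [Finset.sum_congr rfl hcongr, Finset.sum_sub_distrib, Finset.sum_const,
    Finset.sum_boole]
  simp [mul_comm]


/-- G has a Hamiltonian path iff some column permutation π of its
incidence matrix satisfies cons1(π(A)) ≤ 2m − (n−1). -/
theorem stmt3 (n m : ℕ) (G : SimpleGraph (Fin n)) (e : Fin m ≃ G.edgeSet)
    (A : Fin m → Fin n → Bool)
    (hA : ∀ j i, A j i = true ↔ i ∈ (e j : Sym2 (Fin n))) :
    (∃ ℓ : Equiv.Perm (Fin n),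
        ∀ i : ℕ, (h : i + 1 < n) → G.Adj (ℓ ⟨i, by omega⟩) (ℓ ⟨i + 1, h⟩)) ↔
      (∃ π : Equiv.Perm (Fin n),
        (cons1 (fun j i => A j (π i)) : ℤ) ≤ 2 * (m : ℤ) - ((n : ℤ) - 1)) := by
  classical
  constructor
  · rintro ⟨ℓ, hℓ⟩
    refine ⟨ℓ, ?_⟩
    rw [sum_key e A hA ℓ]
    set S := univ.filter (fun j : Fin m => cons1Row n (fun i => A j (ℓ i)) = 1) with hS
    have hcard : (n : ℤ) - 1 ≤ (S.card : ℤ) := by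
      rcases Nat.lt_or_ge n 2 with h2 | h2
      · have h3 : (0:ℤ) ≤ (S.card : ℤ) := Int.natCast_nonneg _
        have h4 : (n:ℤ) ≤ 1 := by exact_mod_cast Nat.lt_succ_iff.mp h2
        linarith
      · -- pick a junk element of Fin m
        have hadj01 : G.Adj (ℓ ⟨0, by omega⟩) (ℓ ⟨1, by omega⟩) := hℓ 0 (by omega)
        have j0 : Fin m := e.symm ⟨s(ℓ ⟨0, by omega⟩, ℓ ⟨1, by omega⟩),
          G.mem_edgeSet.mpr hadj01⟩
        set f : ℕ → Fin m := fun i =>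
          if h : i + 1 < n then
            e.symm ⟨s(ℓ ⟨i, by omega⟩, ℓ ⟨i + 1, h⟩),
              G.mem_edgeSet.mpr (hℓ i h)⟩
          else j0 with hf
        have hfs : ∀ i, (h : i + 1 < n) →
            (e (f i) : Sym2 (Fin n)) = s(ℓ ⟨i, by omega⟩, ℓ ⟨i + 1, h⟩) := by
          intro i h
          rw [hf]
          simp only [dif_pos h]
          rw [Equiv.apply_symm_apply]
        have hmaps : ∀ i ∈ Finset.range (n - 1), f i ∈ S := by
          intro i hi
          rw [Finset.mem_range] at hi
          have h : i + 1 < n := by omega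
          rw [hS, Finset.mem_filter]
          exact ⟨Finset.mem_univ _, (row_key e A hA ℓ (f i)).2.mpr ⟨i, h, hfs i h⟩⟩
        have hinj : Set.InjOn f (Finset.range (n - 1)) := by
          intro i hi i' hi' heq
          simp only [Finset.coe_range, Set.mem_Iio] at hi hi'
          have h : i + 1 < n := by omega
          have h' : i' + 1 < n := by omega
          have hx := hfs i h
          rw [heq] at hx
          have := hx.symm.trans (hfs i' h')
          rw [Sym2.eq_iff] at this
          rcases this with ⟨h1, h2⟩ | ⟨h1, h2⟩
          · have := congrArg Fin.val (ℓ.injective h1); simpa using this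
          · have e1 := congrArg Fin.val (ℓ.injective h1)
            have e2 := congrArg Fin.val (ℓ.injective h2)
            simp at e1 e2; omega
        have := Finset.card_le_card_of_injOn f hmaps hinj
        rw [Finset.card_range] at this
        omega
    linarith
  · rintro ⟨π, hπ⟩
    refine ⟨π, ?_⟩
    intro i hi
    rw [sum_key e A hA π] at hπ
    set S := univ.filter (fun j : Fin m => cons1Row n (fun i => A j (π i)) = 1) with hS
    have hcard : n - 1 ≤ S.card := by omega
    set ψ : Fin m → ℕ := fun j =>
      if hj : cons1Row n (fun k => A j (π k)) = 1 then
        ((row_key e A hA π j).2.mp hj).choose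
      else 0 with hψ
    have hψ_spec : ∀ j ∈ S, ∃ h : ψ j + 1 < n,
        (e j : Sym2 (Fin n)) = s(π ⟨ψ j, by omega⟩, π ⟨ψ j + 1, h⟩) := by
      intro j hj
      rw [hS, Finset.mem_filter] at hj
      simp only [hψ]
      simp only [dif_pos hj.2]
      exact ((row_key e A hA π j).2.mp hj.2).choose_spec
    have himg : S.image ψ ⊆ Finset.range (n - 1) := by
      intro x hx
      rw [Finset.mem_image] at hx
      obtain ⟨j, hj, rfl⟩ := hx
      obtain ⟨h, -⟩ := hψ_spec j hj
      rw [Finset.mem_range]; omega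
    have hinjψ : Set.InjOn ψ S := by
      intro j hj j' hj' heq
      rw [Finset.mem_coe] at hj hj'
      obtain ⟨h1, hs1⟩ := hψ_spec j hj
      obtain ⟨h2, hs2⟩ := hψ_spec j' hj'
      apply e.injective
      apply Subtype.ext
      rw [hs1, hs2]
      congr 2 <;> apply Fin.ext <;> simp [heq]
    have hcard2 : S.card ≤ (S.image ψ).card := by
      rw [Finset.card_image_of_injOn hinjψ]
    have heqset : S.image ψ = Finset.range (n - 1) := by
      apply Finset.eq_of_subset_of_card_le himg
      rw [Finset.card_range]; omega
    have hmem : i ∈ S.image ψ := by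
      rw [heqset, Finset.mem_range]; omega
    rw [Finset.mem_image] at hmem
    obtain ⟨j, hj, hji⟩ := hmem
    obtain ⟨h, hs⟩ := hψ_spec j hj
    subst hji
    have hedge := (e j).2
    rw [hs, SimpleGraph.mem_edgeSet] at hedge
    exact hedge
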